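/- Every compact closed paracategory C admits a faithful strict symmetric monoidal functor of paracategories F into a compact closed (total) category D, which moreover preserves and reflects the trace: for all f : A⊗U → B⊗U and g : A → B in C, the trace Tr^U_{A,B}(f) = [1_A⊗η_U, 1_A⊗σ_{U*,U}, f⊗1_{U*}, 1_B⊗ε_U] is defined and equals g in C if and only if the canonical trace of F(f) in D equals F(g). -/

import Mathlib

universe w w' u v u' v'

/-- Composable paths of arrows in a directed graph. -/
inductive PPath {Obj : Type u} (Hom : Obj → Obj → Type v) : Obj → Obj → Type (max u v)
  | nil (A : Obj) : PPath Hom A A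
  | cons {A B C : Obj} (f : Hom A B) (p : PPath Hom B C) : PPath Hom A C

namespace PPath

variable {Obj : Type u} {Hom : Obj → Obj → Type v}

/-- Concatenation of paths. -/
def append : ∀ {A B C : Obj}, PPath Hom A B → PPath Hom B C → PPath Hom A C
  | _, _, _, .nil _, q => q
  | _, _, _, .cons f p, q => .cons f (append p q)

/-- The path of length one on an arrow. -/
def single {A B : Obj} (f : Hom A B) : PPath Hom A B := .cons f (.nil B)

/-- The image of a path under a graph homomorphism. -/
def map {Obj' : Type u'} {Hom' : Obj' → Obj' → Type v'} (φ : Obj → Obj')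
    (F : ∀ {A B : Obj}, Hom A B → Hom' (φ A) (φ B)) :
    ∀ {A B : Obj}, PPath Hom A B → PPath Hom' (φ A) (φ B)
  | _, _, .nil A => .nil (φ A)
  | _, _, .cons f p => .cons (F f) (map φ (fun f => F f) p)

end PPath

/-- Transport of an arrow of a graph along equalities of its endpoints. -/
def castHom {Obj : Type u} {Hom : Obj → Obj → Type v} {A A' B B' : Obj}
    (h₁ : A = A') (h₂ : B = B') (f : Hom A B) : Hom A' B' := h₁ ▸ h₂ ▸ f

/-- A paracategory: a directed graph together with a partial composition operation on
paths, such that empty paths compose (to the identity `pid`), singleton paths compose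
to themselves, and composition satisfies the splicing (flattening) law. -/
structure Paracategory : Type (max (u + 1) (v + 1)) where
  Obj : Type u
  Hom : Obj → Obj → Type v
  comp : ∀ {A B : Obj}, PPath Hom A B → Option (Hom A B)
  pid : ∀ A : Obj, Hom A A
  comp_nil : ∀ A : Obj, comp (.nil A) = some (pid A)
  comp_single : ∀ {A B : Obj} (f : Hom A B), comp (PPath.single f) = some f
  comp_splice : ∀ {A B C D : Obj} (r : PPath Hom A B) (p : PPath Hom B C)
    (s : PPath Hom C D) (v : Hom B C), comp p = some v →
    comp (r.append (.cons v s)) = comp (r.append (p.append s))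

/-- A paracategory is total when every path composes; total paracategories are
precisely (the underlying graphs with path-composition of) ordinary categories. -/
def Paracategory.total (C : Paracategory.{u, v}) : Prop :=
  ∀ (A B : C.Obj) (p : PPath C.Hom A B), (C.comp p).isSome

/-- Pointwise tensor of two paths of the same length. -/
inductive PathTensor {Obj : Type u} {Hom : Obj → Obj → Type v}
    (tObj : Obj → Obj → Obj)
    (tHom : ∀ (A B C D : Obj), Hom A B → Hom C D → Hom (tObj A C) (tObj B D)) :
    ∀ {A B C D : Obj}, PPath Hom A B → PPath Hom C D →
      PPath Hom (tObj A C) (tObj B D) → Prop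
  | nil (A C : Obj) : PathTensor tObj tHom (.nil A) (.nil C) (.nil (tObj A C))
  | cons {A B C D E F : Obj} (f : Hom A B) (g : Hom C D) {p : PPath Hom B E}
      {q : PPath Hom D F} {r : PPath Hom (tObj B D) (tObj E F)} :
      PathTensor tObj tHom p q r →
      PathTensor tObj tHom (.cons f p) (.cons g q) (.cons (tHom _ _ _ _ f g) r)

/-- A strict symmetric monoidal paracategory. -/
structure SSMParacategory extends Paracategory.{u, v} where
  tObj : Obj → Obj → Obj
  unit : Obj
  tHom : ∀ {A B C D : Obj}, Hom A B → Hom C D → Hom (tObj A C) (tObj B D)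
  tObj_assoc : ∀ A B C, tObj (tObj A B) C = tObj A (tObj B C)
  tObj_unit_left : ∀ A, tObj unit A = A
  tObj_unit_right : ∀ A, tObj A unit = A
  tHom_assoc : ∀ {A B C D E F : Obj} (f : Hom A B) (g : Hom C D) (h : Hom E F),
    castHom (tObj_assoc A C E) (tObj_assoc B D F) (tHom (tHom f g) h) =
      tHom f (tHom g h)
  tHom_unit_left : ∀ {A B : Obj} (f : Hom A B),
    castHom (tObj_unit_left A) (tObj_unit_left B) (tHom (pid unit) f) = f
  tHom_unit_right : ∀ {A B : Obj} (f : Hom A B),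
    castHom (tObj_unit_right A) (tObj_unit_right B) (tHom f (pid unit)) = f
  tensor_comp : ∀ {A B C D : Obj} {p : PPath Hom A B} {q : PPath Hom C D}
    {r : PPath Hom (tObj A C) (tObj B D)},
    PathTensor tObj (fun _ _ _ _ f g => tHom f g) p q r →
    ∀ (vp : Hom A B) (vq : Hom C D), comp p = some vp → comp q = some vq →
      comp r = some (tHom vp vq)
  braid : ∀ A B : Obj, Hom (tObj A B) (tObj B A)
  braid_total_left : ∀ {X A B Y : Obj} (f : Hom (tObj X (tObj B A)) Y),
    (comp (.cons (tHom (pid X) (braid A B)) (PPath.single f))).isSome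
  braid_total_right : ∀ {X A B Y : Obj} (g : Hom Y (tObj X (tObj A B))),
    (comp (.cons g (PPath.single (tHom (pid X) (braid A B))))).isSome
  braid_natural_left : ∀ {A A' B : Obj} (f : Hom A A'),
    ∃ w, comp (.cons (tHom f (pid B)) (PPath.single (braid A' B))) = some w ∧
      comp (.cons (braid A B) (PPath.single (tHom (pid B) f))) = some w
  braid_natural_right : ∀ {A B B' : Obj} (g : Hom B B'),
    ∃ w, comp (.cons (tHom (pid A) g) (PPath.single (braid A B'))) = some w ∧
      comp (.cons (braid A B) (PPath.single (tHom g (pid A)))) = some w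
  braid_symmetry : ∀ A B : Obj,
    comp (.cons (braid A B) (PPath.single (braid B A))) = some (pid (tObj A B))
  braid_hexagon : ∀ A B C : Obj,
    comp (.cons (tHom (braid A B) (pid C))
        (PPath.single (castHom (tObj_assoc B A C).symm (tObj_assoc B C A).symm
          (tHom (pid B) (braid A C))))) =
      some (castHom (tObj_assoc A B C).symm rfl (braid A (tObj B C)))

/-- A strict symmetric monoidal functor of paracategories. -/
structure SSMFunctor (C : SSMParacategory.{u, v}) (D : SSMParacategory.{u', v'}) where
  obj : C.Obj → D.Obj
  map : ∀ {A B : C.Obj}, C.Hom A B → D.Hom (obj A) (obj B)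
  map_comp : ∀ {A B : C.Obj} (p : PPath C.Hom A B) (v : C.Hom A B),
    C.comp p = some v → D.comp (p.map obj (fun f => map f)) = some (map v)
  obj_tensor : ∀ A B : C.Obj, obj (C.tObj A B) = D.tObj (obj A) (obj B)
  obj_unit : obj C.unit = D.unit
  map_tensor : ∀ {A B A' B' : C.Obj} (f : C.Hom A B) (g : C.Hom A' B'),
    castHom (obj_tensor A A') (obj_tensor B B') (map (C.tHom f g)) =
      D.tHom (map f) (map g)
  map_braid : ∀ A B : C.Obj,
    castHom (obj_tensor A B) (obj_tensor B A) (map (C.braid A B)) =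
      D.braid (obj A) (obj B)

/-- Faithfulness of a functor of paracategories. -/
def SSMFunctor.Faithful {C : SSMParacategory.{u, v}} {D : SSMParacategory.{u', v'}}
    (F : SSMFunctor C D) : Prop :=
  ∀ (A B : C.Obj) (f g : C.Hom A B), F.map f = F.map g → f = g

/-- Fullness of a functor of paracategories. -/
def SSMFunctor.Full {C : SSMParacategory.{u, v}} {D : SSMParacategory.{u', v'}}
    (F : SSMFunctor C D) : Prop :=
  ∀ (A B : C.Obj) (g : D.Hom (F.obj A) (F.obj B)), ∃ f : C.Hom A B, F.map f = g

/-- A (strict symmetric) compact closed paracategory. -/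
structure CompactClosedPara extends SSMParacategory.{u, v} where
  dual : Obj → Obj
  eta : ∀ A : Obj, Hom unit (tObj (dual A) A)
  eps : ∀ A : Obj, Hom (tObj A (dual A)) unit
  total_eta_left : ∀ {A B C : Obj} (f : Hom (tObj A (dual C)) B),
    (comp (.cons (castHom (tObj_unit_right A) rfl (tHom (pid A) (eta C)))
      (PPath.single (castHom (tObj_assoc A (dual C) C) rfl
        (tHom f (pid C)))))).isSome
  total_eps_left : ∀ {A B C : Obj} (g : Hom A (tObj B C)),
    (comp (.cons (tHom g (pid (dual C)))
      (PPath.single (castHom (tObj_assoc B C (dual C)).symm (tObj_unit_right B)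
        (tHom (pid B) (eps C)))))).isSome
  total_eta_right : ∀ {A B C : Obj} (h : Hom (tObj A B) C),
    (comp (.cons (castHom (tObj_unit_left B) (tObj_assoc (dual A) A B)
        (tHom (eta A) (pid B)))
      (PPath.single (tHom (pid (dual A)) h)))).isSome
  total_eps_right : ∀ {A B C : Obj} (k : Hom B (tObj (dual A) C)),
    (comp (.cons (tHom (pid A) k)
      (PPath.single (castHom (tObj_assoc A (dual A) C) (tObj_unit_left C)
        (tHom (eps A) (pid C)))))).isSome
  triangle_left : ∀ A : Obj,
    comp (.cons (castHom (tObj_unit_right A) rfl (tHom (pid A) (eta A)))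
        (PPath.single (castHom (tObj_assoc A (dual A) A) (tObj_unit_left A)
          (tHom (eps A) (pid A))))) = some (pid A)
  triangle_right : ∀ A : Obj,
    comp (.cons (castHom (tObj_unit_left (dual A)) (tObj_assoc (dual A) A (dual A))
        (tHom (eta A) (pid (dual A))))
        (PPath.single (castHom rfl (tObj_unit_right (dual A))
          (tHom (pid (dual A)) (eps A))))) = some (pid (dual A))

/-- The (partially defined) trace of `f : A⊗U ⟶ B⊗U` in a compact closed
paracategory: `Tr^U(f) :≃ [1_A⊗η_U, 1_A⊗σ_{U*,U}, f⊗1_{U*}, 1_B⊗ε_U]`. -/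
def CompactClosedPara.ccTrace (C : CompactClosedPara.{u, v}) {A B U : C.Obj}
    (f : C.Hom (C.tObj A U) (C.tObj B U)) : Option (C.Hom A B) :=
  C.comp (.cons (castHom (C.tObj_unit_right A) rfl (C.tHom (C.pid A) (C.eta U)))
    (.cons (C.tHom (C.pid A) (C.braid (C.dual U) U))
      (.cons (castHom (C.tObj_assoc A U (C.dual U)) (C.tObj_assoc B U (C.dual U))
          (C.tHom f (C.pid (C.dual U))))
        (PPath.single (castHom rfl (C.tObj_unit_right B)
          (C.tHom (C.pid B) (C.eps U)))))))

namespace PPath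
variable {Obj : Type u} {Hom : Obj → Obj → Type v}

theorem append_nil : ∀ {A B : Obj} (p : PPath Hom A B), p.append (.nil B) = p
  | _, _, .nil A => rfl
  | _, _, .cons f p => by rw [append, append_nil p]

theorem append_assoc : ∀ {A B C D : Obj} (p : PPath Hom A B) (q : PPath Hom B C)
    (r : PPath Hom C D), (p.append q).append r = p.append (q.append r)
  | _, _, _, _, .nil _, q, r => rfl
  | _, _, _, _, .cons f p, q, r => by rw [append, append, append, append_assoc p]

theorem map_append {Obj' : Type u'} {Hom' : Obj' → Obj' → Type v'} (φ : Obj → Obj')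
    (F : ∀ {A B : Obj}, Hom A B → Hom' (φ A) (φ B)) :
    ∀ {A B C : Obj} (p : PPath Hom A B) (q : PPath Hom B C),
      (p.append q).map φ (fun f => F f) =
        (p.map φ (fun f => F f)).append (q.map φ (fun f => F f))
  | _, _, _, .nil _, q => rfl
  | _, _, _, .cons f p, q => by rw [append, map, map, append, map_append φ F p]

theorem heq_nil {A A' : Obj} (h : A = A') :
    HEq (PPath.nil (Hom := Hom) A) (PPath.nil (Hom := Hom) A') := by subst h; rfl

theorem heq_cons {A B C A' B' C' : Obj} (hA : A = A') (hB : B = B') (hC : C = C')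
    {f : Hom A B} {p : PPath Hom B C} {f' : Hom A' B'} {p' : PPath Hom B' C'}
    (hf : HEq f f') (hp : HEq p p') : HEq (PPath.cons f p) (PPath.cons f' p') := by
  subst hA; subst hB; subst hC; rw [eq_of_heq hf, eq_of_heq hp]

theorem heq_append {A B C A' B' C' : Obj} (hA : A = A') (hB : B = B') (hC : C = C')
    {p : PPath Hom A B} {q : PPath Hom B C} {p' : PPath Hom A' B'} {q' : PPath Hom B' C'}
    (hp : HEq p p') (hq : HEq q q') : HEq (p.append q) (p'.append q') := by
  subst hA; subst hB; subst hC; rw [eq_of_heq hp, eq_of_heq hq]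

end PPath

theorem castHom_rfl {Obj : Type u} {Hom : Obj → Obj → Type v} {A B : Obj}
    (f : Hom A B) : castHom rfl rfl f = f := rfl

theorem heq_castHom {Obj : Type u} {Hom : Obj → Obj → Type v} {A A' B B' : Obj}
    (h₁ : A = A') (h₂ : B = B') (f : Hom A B) : HEq (castHom h₁ h₂ f) f := by
  subst h₁; subst h₂; rfl

theorem castHom_eq_of_heq {Obj : Type u} {Hom : Obj → Obj → Type v} {A A' B B' : Obj}
    (h₁ : A = A') (h₂ : B = B') {f : Hom A B} {g : Hom A' B'} (h : HEq f g) :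
    castHom h₁ h₂ f = g := by subst h₁; subst h₂; exact eq_of_heq h

theorem heq_of_castHom_eq {Obj : Type u} {Hom : Obj → Obj → Type v} {A A' B B' : Obj}
    {h₁ : A = A'} {h₂ : B = B'} {f : Hom A B} {g : Hom A' B'}
    (h : castHom h₁ h₂ f = g) : HEq f g := by subst h₁; subst h₂; exact heq_of_eq h

namespace CCP
variable {C : CompactClosedPara.{u, v}}

theorem comp_cons_pid {X Y : C.Obj} (q : PPath C.Hom X Y) :
    C.comp (.cons (C.pid X) q) = C.comp q := by
  have := C.comp_splice (.nil X) (.nil X) q (C.pid X) (C.comp_nil X)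
  simpa [PPath.append] using this

theorem comp_id_left {X Y : C.Obj} (f : C.Hom X Y) :
    C.comp (.cons (C.pid X) (PPath.single f)) = some f := by
  rw [comp_cons_pid]; exact C.comp_single f

theorem comp_id_right {X Y : C.Obj} (f : C.Hom X Y) :
    C.comp (.cons f (PPath.single (C.pid Y))) = some f := by
  have := C.comp_splice (PPath.single f) (.nil Y) (.nil Y) (C.pid Y) (C.comp_nil Y)
  simp only [PPath.append, PPath.single] at this
  simp only [PPath.single]
  rw [this]; exact C.comp_single f

theorem pid_tensor (X Y : C.Obj) :
    C.tHom (C.pid X) (C.pid Y) = C.pid (C.tObj X Y) := by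
  have := C.tensor_comp (PathTensor.nil X Y) (C.pid X) (C.pid Y)
    (C.comp_nil X) (C.comp_nil Y)
  rw [C.comp_nil] at this
  exact (Option.some_injective _ this).symm

theorem interchange₁ {X Y Z W : C.Obj} (f : C.Hom X Y) (g : C.Hom Z W) :
    C.comp (.cons (C.tHom f (C.pid Z)) (PPath.single (C.tHom (C.pid Y) g))) =
      some (C.tHom f g) := by
  have pt : PathTensor C.tObj (fun _ _ _ _ f g => C.tHom f g)
      (.cons f (PPath.single (C.pid Y))) (.cons (C.pid Z) (PPath.single g))
      (.cons (C.tHom f (C.pid Z)) (PPath.single (C.tHom (C.pid Y) g))) :=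
    PathTensor.cons f (C.pid Z) (PathTensor.cons (C.pid Y) g (PathTensor.nil Y W))
  exact C.tensor_comp pt f g (comp_id_right f) (comp_id_left g)

theorem interchange₂ {X Y Z W : C.Obj} (f : C.Hom X Y) (g : C.Hom Z W) :
    C.comp (.cons (C.tHom (C.pid X) g) (PPath.single (C.tHom f (C.pid W)))) =
      some (C.tHom f g) := by
  have pt : PathTensor C.tObj (fun _ _ _ _ f g => C.tHom f g)
      (.cons (C.pid X) (PPath.single f)) (.cons g (PPath.single (C.pid W)))
      (.cons (C.tHom (C.pid X) g) (PPath.single (C.tHom f (C.pid W)))) :=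
    PathTensor.cons (C.pid X) g (PathTensor.cons f (C.pid W) (PathTensor.nil Y W))
  exact C.tensor_comp pt f g (comp_id_left f) (comp_id_right g)

end CCP


namespace CCP
variable {C : CompactClosedPara.{u, v}}

/-- Tensoring a path with an identity on the right. -/
def mapL (E : C.Obj) {X Y : C.Obj} (p : PPath C.Hom X Y) :
    PPath C.Hom (C.tObj X E) (C.tObj Y E) :=
  p.map (fun Z => C.tObj Z E) (fun f => C.tHom f (C.pid E))

/-- Tensoring a path with an identity on the left. -/
def mapR (E : C.Obj) {X Y : C.Obj} (p : PPath C.Hom X Y) :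
    PPath C.Hom (C.tObj E X) (C.tObj E Y) :=
  p.map (fun Z => C.tObj E Z) (fun f => C.tHom (C.pid E) f)

@[simp] theorem mapL_nil (E X : C.Obj) : mapL E (.nil X) = .nil (C.tObj X E) := rfl
@[simp] theorem mapR_nil (E X : C.Obj) : mapR E (.nil X) = .nil (C.tObj E X) := rfl
@[simp] theorem mapL_cons (E : C.Obj) {X Y Z : C.Obj} (f : C.Hom X Y)
    (p : PPath C.Hom Y Z) :
    mapL E (.cons f p) = .cons (C.tHom f (C.pid E)) (mapL E p) := rfl
@[simp] theorem mapR_cons (E : C.Obj) {X Y Z : C.Obj} (f : C.Hom X Y)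
    (p : PPath C.Hom Y Z) :
    mapR E (.cons f p) = .cons (C.tHom (C.pid E) f) (mapR E p) := rfl
@[simp] theorem mapL_append (E : C.Obj) {X Y Z : C.Obj} (p : PPath C.Hom X Y)
    (q : PPath C.Hom Y Z) : mapL E (p.append q) = (mapL E p).append (mapL E q) :=
  PPath.map_append _ _ p q
@[simp] theorem mapR_append (E : C.Obj) {X Y Z : C.Obj} (p : PPath C.Hom X Y)
    (q : PPath C.Hom Y Z) : mapR E (p.append q) = (mapR E p).append (mapR E q) :=
  PPath.map_append _ _ p q

/-- An identity path of the same length as a given path. -/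
def idp (E : C.Obj) : ∀ {X Y : C.Obj}, PPath C.Hom X Y → PPath C.Hom E E
  | _, _, .nil _ => .nil E
  | _, _, .cons _ p => .cons (C.pid E) (idp E p)

theorem comp_idp (E : C.Obj) : ∀ {X Y : C.Obj} (p : PPath C.Hom X Y),
    C.comp (idp E p) = some (C.pid E)
  | _, _, .nil _ => C.comp_nil E
  | _, _, .cons _ p => by rw [idp, comp_cons_pid]; exact comp_idp E p

theorem pt_mapL (E : C.Obj) : ∀ {X Y : C.Obj} (p : PPath C.Hom X Y),
    PathTensor C.tObj (fun _ _ _ _ f g => C.tHom f g) p (idp E p) (mapL E p)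
  | _, _, .nil X => PathTensor.nil X E
  | _, _, .cons f p => PathTensor.cons f (C.pid E) (pt_mapL E p)

theorem pt_mapR (E : C.Obj) : ∀ {X Y : C.Obj} (p : PPath C.Hom X Y),
    PathTensor C.tObj (fun _ _ _ _ f g => C.tHom f g) (idp E p) p (mapR E p)
  | _, _, .nil X => PathTensor.nil E X
  | _, _, .cons f p => PathTensor.cons (C.pid E) f (pt_mapR E p)

theorem comp_mapL (E : C.Obj) {X Y : C.Obj} {p : PPath C.Hom X Y} {v : C.Hom X Y}
    (h : C.comp p = some v) : C.comp (mapL E p) = some (C.tHom v (C.pid E)) :=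
  C.tensor_comp (pt_mapL E p) v (C.pid E) h (comp_idp E p)

theorem comp_mapR (E : C.Obj) {X Y : C.Obj} {p : PPath C.Hom X Y} {v : C.Hom X Y}
    (h : C.comp p = some v) : C.comp (mapR E p) = some (C.tHom (C.pid E) v) :=
  C.tensor_comp (pt_mapR E p) (C.pid E) v (comp_idp E p) h

/-- The congruence on paths generated by contracting a composable subpath. -/
inductive Rel (C : CompactClosedPara.{u, v}) {X Y : C.Obj} :
    PPath C.Hom X Y → PPath C.Hom X Y → Prop
  | mk {X' Y' : C.Obj} (r : PPath C.Hom X X') (p : PPath C.Hom X' Y')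
      (s : PPath C.Hom Y' Y) (v : C.Hom X' Y') (h : C.comp p = some v) :
      Rel C (r.append (.cons v s)) (r.append (p.append s))

/-- Hom-sets of the total category: paths modulo the congruence. -/
def DHom (C : CompactClosedPara.{u, v}) (X Y : C.Obj) : Type (max u v) :=
  Quot (Rel C (X := X) (Y := Y))

def mk {X Y : C.Obj} (p : PPath C.Hom X Y) : DHom C X Y := Quot.mk _ p

/-- Composition in `C` is invariant under the congruence. -/
def compQ {X Y : C.Obj} : DHom C X Y → Option (C.Hom X Y) :=
  Quot.lift C.comp (fun _ _ h => by
    cases h with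
    | mk r p s v hv => exact C.comp_splice r p s v hv)

@[simp] theorem compQ_mk {X Y : C.Obj} (p : PPath C.Hom X Y) :
    compQ (mk p : DHom C X Y) = C.comp p := rfl

theorem comp_eq_of_mk_eq {X Y : C.Obj} {p q : PPath C.Hom X Y}
    (h : (mk p : DHom C X Y) = mk q) : C.comp p = C.comp q := congrArg compQ h

theorem mk_comp {X Y : C.Obj} {p : PPath C.Hom X Y} {v : C.Hom X Y}
    (h : C.comp p = some v) : (mk p : DHom C X Y) = mk (PPath.single v) := by
  have := Quot.sound (Rel.mk (C := C) (.nil X) p (.nil Y) v h)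
  simp only [PPath.append, PPath.append_nil] at this
  exact this.symm

/-- Appending respects the congruence. -/
theorem rel_append_right {X Y Z : C.Obj} (p : PPath C.Hom X Y) {q q' : PPath C.Hom Y Z}
    (h : Rel C q q') : (mk (p.append q) : DHom C X Z) = mk (p.append q') := by
  cases h with
  | mk r p₀ s v hv =>
    have := Quot.sound (Rel.mk (C := C) (p.append r) p₀ s v hv)
    simp [PPath.append_assoc] at this
    exact this

theorem rel_append_left {X Y Z : C.Obj} {p p' : PPath C.Hom X Y} (q : PPath C.Hom Y Z)
    (h : Rel C p p') : (mk (p.append q) : DHom C X Z) = mk (p'.append q) := by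
  cases h with
  | mk r p₀ s v hv =>
    have := Quot.sound (Rel.mk (C := C) r p₀ (s.append q) v hv)
    rw [PPath.append_assoc, PPath.append_assoc, PPath.append_assoc]
    simp only [PPath.append]
    exact this

/-- Composition (concatenation) on the quotient. -/
def appQ {X Y Z : C.Obj} : DHom C X Y → DHom C Y Z → DHom C X Z :=
  Quot.lift
    (fun p => Quot.lift (fun q => mk (p.append q)) (fun _ _ h => rel_append_right p h))
    (fun p p' h => funext fun x => by
      induction x using Quot.ind with | _ q => exact rel_append_left q h)

@[simp] theorem appQ_mk {X Y Z : C.Obj} (p : PPath C.Hom X Y) (q : PPath C.Hom Y Z) :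
    appQ (mk p) (mk q) = (mk (p.append q) : DHom C X Z) := rfl

theorem appQ_assoc {X Y Z W : C.Obj} (a : DHom C X Y) (b : DHom C Y Z)
    (c : DHom C Z W) : appQ (appQ a b) c = appQ a (appQ b c) := by
  induction a using Quot.ind with | _ p =>
  induction b using Quot.ind with | _ q =>
  induction c using Quot.ind with | _ r =>
  show mk _ = mk _
  rw [PPath.append_assoc]

@[simp] theorem appQ_nil_right {X Y : C.Obj} (a : DHom C X Y) :
    appQ a (mk (.nil Y)) = a := by
  induction a using Quot.ind with | _ p =>
  show mk _ = mk _
  rw [PPath.append_nil]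

@[simp] theorem appQ_nil_left {X Y : C.Obj} (a : DHom C X Y) :
    appQ (mk (.nil X)) a = a := by
  induction a using Quot.ind with | _ p =>
  rfl

/-- Flattening a path of equivalence classes. -/
def flat : ∀ {X Y : C.Obj}, PPath (DHom C) X Y → DHom C X Y
  | _, _, .nil X => mk (.nil X)
  | _, _, .cons q p => appQ q (flat p)

@[simp] theorem flat_nil (X : C.Obj) : flat (.nil X) = (mk (.nil X) : DHom C X X) := rfl
@[simp] theorem flat_cons {X Y Z : C.Obj} (q : DHom C X Y) (p : PPath (DHom C) Y Z) :
    flat (.cons q p) = appQ q (flat p) := rfl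

theorem flat_append {X Y Z : C.Obj} (p : PPath (DHom C) X Y) (q : PPath (DHom C) Y Z) :
    flat (p.append q) = appQ (flat p) (flat q) := by
  induction p with
  | nil => simp [PPath.append]
  | cons f p ih => simp [PPath.append, ih, appQ_assoc]

end CCP


namespace CCP
variable {C : CompactClosedPara.{u, v}}

/-- Tensor product of two paths: first component then second component. -/
def tupP {X Y Z W : C.Obj} (p : PPath C.Hom X Y) (q : PPath C.Hom Z W) :
    PPath C.Hom (C.tObj X Z) (C.tObj Y W) :=
  (mapL Z p).append (mapR Y q)

theorem rel_tup_left {X Y Z W : C.Obj} {p p' : PPath C.Hom X Y} (q : PPath C.Hom Z W)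
    (h : Rel C p p') : (mk (tupP p q) : DHom C _ _) = mk (tupP p' q) := by
  cases h with
  | mk r p₀ s v hv =>
    have := Quot.sound (Rel.mk (C := C) (mapL Z r) (mapL Z p₀)
      ((mapL Z s).append (mapR Y q)) (C.tHom v (C.pid Z)) (comp_mapL Z hv))
    simp [tupP, PPath.append, PPath.append_assoc] at this ⊢
    exact this

theorem rel_tup_right {X Y Z W : C.Obj} (p : PPath C.Hom X Y) {q q' : PPath C.Hom Z W}
    (h : Rel C q q') : (mk (tupP p q) : DHom C _ _) = mk (tupP p q') := by
  cases h with
  | mk r p₀ s v hv =>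
    have := Quot.sound (Rel.mk (C := C) ((mapL Z p).append (mapR Y r)) (mapR Y p₀)
      (mapR Y s) (C.tHom (C.pid Y) v) (comp_mapR Y hv))
    simp [tupP, PPath.append, PPath.append_assoc] at this ⊢
    exact this

/-- The tensor on the quotient. -/
def tHomD {X Y Z W : C.Obj} : DHom C X Y → DHom C Z W → DHom C (C.tObj X Z) (C.tObj Y W) :=
  Quot.lift
    (fun p => Quot.lift (fun q => mk (tupP p q)) (fun _ _ h => rel_tup_right p h))
    (fun p p' h => funext fun x => by
      induction x using Quot.ind with | _ q => exact rel_tup_left q h)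

@[simp] theorem tHomD_mk {X Y Z W : C.Obj} (p : PPath C.Hom X Y) (q : PPath C.Hom Z W) :
    tHomD (mk p) (mk q) = (mk (tupP p q) : DHom C _ _) := rfl

/-- Interchange for singletons, on the quotient. -/
theorem mk_interchange {X Y Z W : C.Obj} (f : C.Hom X Y) (g : C.Hom Z W) :
    (mk (.cons (C.tHom f (C.pid Z)) (PPath.single (C.tHom (C.pid Y) g))) : DHom C _ _) =
      mk (.cons (C.tHom (C.pid X) g) (PPath.single (C.tHom f (C.pid W)))) := by
  rw [mk_comp (interchange₁ f g), mk_comp (interchange₂ f g)]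

@[simp] theorem mk_cons {X Y Z : C.Obj} (f : C.Hom X Y) (p : PPath C.Hom Y Z) :
    (mk (PPath.cons f p) : DHom C X Z) = appQ (mk (PPath.single f)) (mk p) := rfl

theorem app_congr {X Y Z : C.Obj} {p p' : PPath C.Hom X Y} {q q' : PPath C.Hom Y Z}
    (h1 : (mk p : DHom C X Y) = mk p') (h2 : (mk q : DHom C Y Z) = mk q') :
    (mk (p.append q) : DHom C X Z) = mk (p'.append q') := by
  have := congrArg₂ appQ h1 h2
  simpa using this

/-- Moving a single left-tensored arrow through a block of right-tensored arrows. -/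
theorem swap_single : ∀ {Z W : C.Obj} (q : PPath C.Hom Z W) {X Y : C.Obj}
    (x : C.Hom X Y),
    (mk ((mapR X q).append (PPath.single (C.tHom x (C.pid W)))) : DHom C _ _) =
      mk (.cons (C.tHom x (C.pid Z)) (mapR Y q))
  | _, _, .nil _, _, _, x => rfl
  | _, _, .cons y q, X, Y, x => by
    have h2 : (mk (PPath.cons (C.tHom (C.pid X) y)
          (PPath.single (C.tHom x (C.pid _)))) : DHom C _ _) =
        mk (.cons (C.tHom x (C.pid _)) (PPath.single (C.tHom (C.pid Y) y))) := by
      rw [mk_comp (interchange₂ x y), mk_comp (interchange₁ x y)]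
    rw [mapR_cons, PPath.append, mk_cons, swap_single q x, mk_cons, ← appQ_assoc]
    rw [appQ_mk]
    show appQ (mk (PPath.cons (C.tHom (C.pid X) y)
      (PPath.single (C.tHom x (C.pid _))))) (mk (mapR Y q)) = _
    rw [h2]
    rfl

/-- Commuting a block of right-tensored arrows past a block of left-tensored arrows. -/
theorem comm_blocks : ∀ {X Y : C.Obj} (p : PPath C.Hom X Y) {Z W : C.Obj}
    (q : PPath C.Hom Z W),
    (mk ((mapR X q).append (mapL W p)) : DHom C _ _) =
      mk ((mapL Z p).append (mapR Y q))
  | _, _, .nil _, _, _, q => by rw [mapL_nil, PPath.append_nil]; rfl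
  | _, _, .cons x p, _, _, q => by
    rw [mapL_cons]
    rw [show (mapR _ q).append (PPath.cons (C.tHom x (C.pid _)) (mapL _ p)) =
        ((mapR _ q).append (PPath.single (C.tHom x (C.pid _)))).append (mapL _ p) from
      by rw [PPath.append_assoc]; rfl]
    rw [app_congr (swap_single q x) rfl]
    show appQ (mk (PPath.single (C.tHom x (C.pid _))))
      (mk ((mapR _ q).append (mapL _ p))) = _
    rw [comm_blocks p q]
    rfl

theorem tHomD_app {X₀ X₁ X₂ Y₀ Y₁ Y₂ : C.Obj} (a : DHom C X₀ X₁) (c : DHom C X₁ X₂)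
    (b : DHom C Y₀ Y₁) (d : DHom C Y₁ Y₂) :
    appQ (tHomD a b) (tHomD c d) = tHomD (appQ a c) (appQ b d) := by
  induction a using Quot.ind with | _ pa =>
  induction c using Quot.ind with | _ pc =>
  induction b using Quot.ind with | _ pb =>
  induction d using Quot.ind with | _ pd =>
  show mk ((tupP pa pb).append (tupP pc pd)) = mk (tupP (pa.append pc) (pb.append pd))
  have key := congrArg (fun z => appQ (appQ (mk (mapL Y₀ pa)) z) (mk (mapR X₂ pd)))
    (comm_blocks pc pb)
  simpa [tupP, mapL_append, mapR_append, PPath.append_assoc] using key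

end CCP


namespace CCP
variable {C : CompactClosedPara.{u, v}}

theorem mk_cast {X X' Y Y' : C.Obj} (h₁ : X = X') (h₂ : Y = Y') (p : PPath C.Hom X Y) :
    castHom (Hom := DHom C) h₁ h₂ (mk p) =
      mk (castHom (Hom := PPath C.Hom) h₁ h₂ p) := by
  subst h₁; subst h₂; rfl

theorem castPath_single {Obj : Type u'} {Hom : Obj → Obj → Type v'} {X X' Y Y' : Obj}
    (h₁ : X = X') (h₂ : Y = Y') (f : Hom X Y) :
    castHom (Hom := PPath Hom) h₁ h₂ (PPath.single f) =
      PPath.single (castHom h₁ h₂ f) := by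
  subst h₁; subst h₂; rfl

theorem mk_cast_single {X X' Y Y' : C.Obj} (h₁ : X = X') (h₂ : Y = Y')
    (f : C.Hom X Y) :
    castHom (Hom := DHom C) h₁ h₂ (mk (PPath.single f)) =
      mk (PPath.single (castHom h₁ h₂ f)) := by
  rw [mk_cast, castPath_single]

theorem mk_cast_of_heq {X X' Y Y' : C.Obj} (h₁ : X = X') (h₂ : Y = Y')
    {p : PPath C.Hom X Y} {p' : PPath C.Hom X' Y'} (h : HEq p p') :
    castHom (Hom := DHom C) h₁ h₂ (mk p) = mk p' := by
  subst h₁; subst h₂; rw [castHom_rfl]; exact congrArg mk (eq_of_heq h)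

theorem heq_mapL_mapL (E Z : C.Obj) : ∀ {X Y : C.Obj} (p : PPath C.Hom X Y),
    HEq (mapL E (mapL Z p)) (mapL (C.tObj Z E) p)
  | _, _, .nil X => PPath.heq_nil (C.tObj_assoc X Z E)
  | _, _, .cons (B := M) f p => by
    refine PPath.heq_cons (C.tObj_assoc _ Z E) (C.tObj_assoc M Z E)
      (C.tObj_assoc _ Z E) ?_ (heq_mapL_mapL E Z p)
    exact HEq.trans (heq_of_castHom_eq (C.tHom_assoc f (C.pid Z) (C.pid E)))
      (heq_of_eq (by rw [pid_tensor]))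

theorem heq_mapL_mapR (E B : C.Obj) : ∀ {Z W : C.Obj} (q : PPath C.Hom Z W),
    HEq (mapL E (mapR B q)) (mapR B (mapL E q))
  | _, _, .nil Z => PPath.heq_nil (C.tObj_assoc B Z E)
  | _, _, .cons (B := M) y q => by
    refine PPath.heq_cons (C.tObj_assoc B _ E) (C.tObj_assoc B M E)
      (C.tObj_assoc B _ E) ?_ (heq_mapL_mapR E B q)
    exact heq_of_castHom_eq (C.tHom_assoc (C.pid B) y (C.pid E))

theorem heq_mapR_mapR (B D : C.Obj) : ∀ {E F : C.Obj} (s : PPath C.Hom E F),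
    HEq (mapR (C.tObj B D) s) (mapR B (mapR D s))
  | _, _, .nil E => PPath.heq_nil (C.tObj_assoc B D E)
  | _, _, .cons (B := M) z s => by
    refine PPath.heq_cons (C.tObj_assoc B D _) (C.tObj_assoc B D M)
      (C.tObj_assoc B D _) ?_ (heq_mapR_mapR B D s)
    refine HEq.trans (heq_of_eq ?_)
      (heq_of_castHom_eq (C.tHom_assoc (C.pid B) (C.pid D) z))
    rw [pid_tensor]

theorem heq_mapR_unit : ∀ {X Y : C.Obj} (p : PPath C.Hom X Y),
    HEq (mapR C.unit p) p
  | _, _, .nil X => PPath.heq_nil (C.tObj_unit_left X)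
  | _, _, .cons (B := M) f p => by
    refine PPath.heq_cons (C.tObj_unit_left _) (C.tObj_unit_left M)
      (C.tObj_unit_left _) ?_ (heq_mapR_unit p)
    exact heq_of_castHom_eq (C.tHom_unit_left f)

theorem heq_mapL_unit : ∀ {X Y : C.Obj} (p : PPath C.Hom X Y),
    HEq (mapL C.unit p) p
  | _, _, .nil X => PPath.heq_nil (C.tObj_unit_right X)
  | _, _, .cons (B := M) f p => by
    refine PPath.heq_cons (C.tObj_unit_right _) (C.tObj_unit_right M)
      (C.tObj_unit_right _) ?_ (heq_mapL_unit p)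
    exact heq_of_castHom_eq (C.tHom_unit_right f)

/-- Naturality of the braiding against a block of left-tensored arrows. -/
theorem nat_block_l : ∀ {X X' : C.Obj} (p : PPath C.Hom X X') (B : C.Obj),
    (mk ((mapL B p).append (PPath.single (C.braid X' B))) : DHom C _ _) =
      mk (.cons (C.braid X B) (mapR B p))
  | _, _, .nil _, B => rfl
  | _, _, .cons (B := M) x p, B => by
    obtain ⟨w, hw1, hw2⟩ := C.braid_natural_left (B := B) x
    rw [mapL_cons, PPath.append, mk_cons, nat_block_l p B, mk_cons, ← appQ_assoc,
      appQ_mk]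
    show appQ (mk (PPath.cons (C.tHom x (C.pid B))
      (PPath.single (C.braid M B)))) (mk (mapR B p)) = _
    rw [mk_comp hw1, ← mk_comp hw2]
    rfl

/-- Naturality of the braiding against a block of right-tensored arrows. -/
theorem nat_block_r : ∀ {X X' : C.Obj} (p : PPath C.Hom X X') (A : C.Obj),
    (mk ((mapR A p).append (PPath.single (C.braid A X'))) : DHom C _ _) =
      mk (.cons (C.braid A X) (mapL A p))
  | _, _, .nil _, A => rfl
  | _, _, .cons (B := M) x p, A => by
    obtain ⟨w, hw1, hw2⟩ := C.braid_natural_right (A := A) x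
    rw [mapR_cons, PPath.append, mk_cons, nat_block_r p A, mk_cons, ← appQ_assoc,
      appQ_mk]
    show appQ (mk (PPath.cons (C.tHom (C.pid A) x)
      (PPath.single (C.braid A M)))) (mk (mapL A p)) = _
    rw [mk_comp hw1, ← mk_comp hw2]
    rfl

end CCP


namespace CCP
variable {C : CompactClosedPara.{u, v}}

theorem flat_single {X Y : C.Obj} (a : DHom C X Y) : flat (PPath.single a) = a :=
  appQ_nil_right a

theorem flat_pair {X Y Z : C.Obj} (a : DHom C X Y) (b : DHom C Y Z) :
    flat (.cons a (PPath.single b)) = appQ a b := by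
  show appQ a (flat (PPath.single b)) = appQ a b
  rw [flat_single]

theorem flat_tensor {A B Z W : C.Obj} {p : PPath (DHom C) A B} {q : PPath (DHom C) Z W}
    {r : PPath (DHom C) (C.tObj A Z) (C.tObj B W)}
    (pt : PathTensor C.tObj (fun _ _ _ _ f g => tHomD f g) p q r) :
    flat r = tHomD (flat p) (flat q) := by
  induction pt with
  | nil A Z => rfl
  | cons f g pt ih =>
    show appQ (tHomD f g) (flat _) = tHomD (appQ f (flat _)) (appQ g (flat _))
    rw [ih, tHomD_app]

theorem tHomD_assoc {A B Z W E F : C.Obj} (f : DHom C A B) (g : DHom C Z W)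
    (h : DHom C E F) :
    castHom (Hom := DHom C) (C.tObj_assoc A Z E) (C.tObj_assoc B W F)
      (tHomD (tHomD f g) h) = tHomD f (tHomD g h) := by
  induction f using Quot.ind with | _ p =>
  induction g using Quot.ind with | _ q =>
  induction h using Quot.ind with | _ s =>
  show castHom _ _ (mk (tupP (tupP p q) s)) = mk (tupP p (tupP q s))
  refine mk_cast_of_heq _ _ ?_
  simp only [tupP, mapL_append, mapR_append, PPath.append_assoc]
  exact PPath.heq_append (C.tObj_assoc A Z E) (C.tObj_assoc B Z E)
    (C.tObj_assoc B W F) (heq_mapL_mapL E Z p)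
    (PPath.heq_append (C.tObj_assoc B Z E) (C.tObj_assoc B W E)
      (C.tObj_assoc B W F) (heq_mapL_mapR E B q) (heq_mapR_mapR B W s))

theorem tHomD_unit_left {A B : C.Obj} (f : DHom C A B) :
    castHom (Hom := DHom C) (C.tObj_unit_left A) (C.tObj_unit_left B)
      (tHomD (mk (.nil C.unit)) f) = f := by
  induction f using Quot.ind with | _ p =>
  show castHom _ _ (mk (tupP (.nil C.unit) p)) = mk p
  exact mk_cast_of_heq _ _ (heq_mapR_unit p)

theorem tHomD_unit_right {A B : C.Obj} (f : DHom C A B) :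
    castHom (Hom := DHom C) (C.tObj_unit_right A) (C.tObj_unit_right B)
      (tHomD f (mk (.nil C.unit))) = f := by
  induction f using Quot.ind with | _ p =>
  show castHom _ _ (mk (tupP p (.nil C.unit))) = mk p
  refine mk_cast_of_heq _ _ ?_
  rw [show tupP p (.nil C.unit) = mapL C.unit p from PPath.append_nil _]
  exact heq_mapL_unit p

theorem tHomD_nil_single {A X Y : C.Obj} (f : C.Hom X Y) :
    tHomD (mk (.nil A) : DHom C A A) (mk (PPath.single f)) =
      mk (PPath.single (C.tHom (C.pid A) f)) := rfl

theorem tHomD_single_nil {A X Y : C.Obj} (f : C.Hom X Y) :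
    tHomD (mk (PPath.single f)) (mk (.nil A) : DHom C A A) =
      mk (PPath.single (C.tHom f (C.pid A))) := rfl

theorem spliceD {X X' Y' Y : C.Obj} (r : PPath (DHom C) X X') (p : PPath (DHom C) X' Y')
    (s : PPath (DHom C) Y' Y) (v : DHom C X' Y') (h : some (flat p) = some v) :
    some (flat (r.append (.cons v s))) = some (flat (r.append (p.append s))) := by
  injection h with h
  subst h
  refine congrArg some ?_
  rw [flat_append, flat_append, flat_cons, flat_append]

theorem tensorD_comp {A B Z W : C.Obj} {p : PPath (DHom C) A B} {q : PPath (DHom C) Z W}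
    {r : PPath (DHom C) (C.tObj A Z) (C.tObj B W)}
    (pt : PathTensor C.tObj (fun _ _ _ _ f g => tHomD f g) p q r)
    (vp : DHom C A B) (vq : DHom C Z W) (hp : some (flat p) = some vp)
    (hq : some (flat q) = some vq) : some (flat r) = some (tHomD vp vq) := by
  injection hp with hp; injection hq with hq
  subst hp; subst hq
  exact congrArg some (flat_tensor pt)

theorem natD_left {A A' B : C.Obj} (f : DHom C A A') :
    ∃ w, some (flat (.cons (tHomD f (mk (.nil B)))
        (PPath.single (mk (PPath.single (C.braid A' B)))))) = some w ∧
      some (flat (.cons (mk (PPath.single (C.braid A B)))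
        (PPath.single (tHomD (mk (.nil B)) f)))) = some w := by
  induction f using Quot.ind with | _ p =>
  refine ⟨mk (.cons (C.braid A B) (mapR B p)), congrArg some ?_, congrArg some ?_⟩
  · rw [flat_pair]
    show appQ (tHomD (mk p) (mk (.nil B))) (mk (PPath.single (C.braid A' B))) = _
    rw [show tHomD (mk p) (mk (.nil B)) = mk (mapL B p) from
        congrArg mk (PPath.append_nil (mapL B p)), appQ_mk]
    exact nat_block_l p B
  · rw [flat_pair]
    rfl

theorem natD_right {A B B' : C.Obj} (g : DHom C B B') :
    ∃ w, some (flat (.cons (tHomD (mk (.nil A)) g)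
        (PPath.single (mk (PPath.single (C.braid A B')))))) = some w ∧
      some (flat (.cons (mk (PPath.single (C.braid A B)))
        (PPath.single (tHomD g (mk (.nil A)))))) = some w := by
  induction g using Quot.ind with | _ p =>
  refine ⟨mk (.cons (C.braid A B) (mapL A p)), congrArg some ?_, congrArg some ?_⟩
  · rw [flat_pair]
    show appQ (mk (mapR A p)) (mk (PPath.single (C.braid A B'))) = _
    rw [appQ_mk]
    exact nat_block_r p A
  · rw [flat_pair]
    show appQ (mk (PPath.single (C.braid A B))) (tHomD (mk p) (mk (.nil A))) = _
    rw [show tHomD (mk p) (mk (.nil A)) = mk (mapL A p) from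
        congrArg mk (PPath.append_nil (mapL A p))]
    rfl

theorem symD (A B : C.Obj) :
    some (flat (.cons (mk (PPath.single (C.braid A B)) : DHom C _ _)
        (PPath.single (mk (PPath.single (C.braid B A)))))) =
      some (mk (.nil (C.tObj A B))) := by
  refine congrArg some ?_
  rw [flat_pair, appQ_mk]
  exact (mk_comp (C.braid_symmetry A B)).trans (mk_comp (C.comp_nil _)).symm

theorem hexD (A B Z : C.Obj) :
    some (flat (.cons (tHomD (mk (PPath.single (C.braid A B))) (mk (.nil Z)))
        (PPath.single (castHom (Hom := DHom C) (C.tObj_assoc B A Z).symm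
          (C.tObj_assoc B Z A).symm
          (tHomD (mk (.nil B)) (mk (PPath.single (C.braid A Z)))))))) =
      some (castHom (Hom := DHom C) (C.tObj_assoc A B Z).symm rfl
        (mk (PPath.single (C.braid A (C.tObj B Z))))) := by
  refine congrArg some ?_
  rw [tHomD_single_nil, tHomD_nil_single, mk_cast_single, flat_pair, appQ_mk,
    mk_cast_single]
  exact mk_comp (C.braid_hexagon A B Z)

theorem triD_left (A : C.Obj) :
    some (flat (.cons (castHom (Hom := DHom C) (C.tObj_unit_right A) rfl
        (tHomD (mk (.nil A)) (mk (PPath.single (C.eta A)))))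
        (PPath.single (castHom (Hom := DHom C) (C.tObj_assoc A (C.dual A) A)
          (C.tObj_unit_left A)
          (tHomD (mk (PPath.single (C.eps A))) (mk (.nil A))))))) =
      some (mk (.nil A)) := by
  refine congrArg some ?_
  rw [tHomD_nil_single, tHomD_single_nil, mk_cast_single, mk_cast_single, flat_pair,
    appQ_mk]
  exact (mk_comp (C.triangle_left A)).trans (mk_comp (C.comp_nil A)).symm

theorem triD_right (A : C.Obj) :
    some (flat (.cons (castHom (Hom := DHom C) (C.tObj_unit_left (C.dual A))
        (C.tObj_assoc (C.dual A) A (C.dual A))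
        (tHomD (mk (PPath.single (C.eta A))) (mk (.nil (C.dual A)))))
        (PPath.single (castHom (Hom := DHom C) rfl (C.tObj_unit_right (C.dual A))
          (tHomD (mk (.nil (C.dual A))) (mk (PPath.single (C.eps A)))))))) =
      some (mk (.nil (C.dual A))) := by
  refine congrArg some ?_
  rw [tHomD_single_nil, tHomD_nil_single, mk_cast_single, mk_cast_single, flat_pair,
    appQ_mk]
  exact (mk_comp (C.triangle_right A)).trans (mk_comp (C.comp_nil _)).symm

set_option maxHeartbeats 1000000 in
/-- The total compact closed category built from `C`. -/
def DD (C : CompactClosedPara.{u, v}) : CompactClosedPara.{u, max u v} where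
  Obj := C.Obj
  Hom := DHom C
  comp := fun p => some (flat p)
  pid := fun X => mk (.nil X)
  comp_nil := fun _ => rfl
  comp_single := fun f => congrArg some (flat_single f)
  comp_splice := spliceD
  tObj := C.tObj
  unit := C.unit
  tHom := fun f g => tHomD f g
  tObj_assoc := C.tObj_assoc
  tObj_unit_left := C.tObj_unit_left
  tObj_unit_right := C.tObj_unit_right
  tHom_assoc := fun f g h => tHomD_assoc f g h
  tHom_unit_left := fun f => tHomD_unit_left f
  tHom_unit_right := fun f => tHomD_unit_right f
  tensor_comp := fun pt vp vq hp hq => tensorD_comp pt vp vq hp hq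
  braid := fun A B => mk (PPath.single (C.braid A B))
  braid_total_left := fun _ => rfl
  braid_total_right := fun _ => rfl
  braid_natural_left := fun f => natD_left f
  braid_natural_right := fun g => natD_right g
  braid_symmetry := fun A B => symD A B
  braid_hexagon := fun A B Z => hexD A B Z
  dual := C.dual
  eta := fun A => mk (PPath.single (C.eta A))
  eps := fun A => mk (PPath.single (C.eps A))
  total_eta_left := fun _ => rfl
  total_eps_left := fun _ => rfl
  total_eta_right := fun _ => rfl
  total_eps_right := fun _ => rfl
  triangle_left := fun A => triD_left A
  triangle_right := fun A => triD_right A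

end CCP


namespace CCP
variable {C : CompactClosedPara.{u, v}}

theorem flat_map : ∀ {X Y : C.Obj} (p : PPath C.Hom X Y),
    flat (p.map (fun X => X) (fun f => (mk (PPath.single f) : DHom C _ _))) = mk p
  | _, _, .nil X => rfl
  | _, _, .cons f p => by
    show appQ (mk (PPath.single f)) (flat (p.map (fun X => X)
      (fun f => (mk (PPath.single f) : DHom C _ _)))) = mk (.cons f p)
    rw [flat_map p]
    rfl

/-- The embedding functor. -/
def FF (C : CompactClosedPara.{u, v}) :
    SSMFunctor C.toSSMParacategory (DD C).toSSMParacategory where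
  obj := fun X => X
  map := fun f => mk (PPath.single f)
  map_comp := fun p v h => by
    show some (flat (p.map (fun X => X) (fun f => (mk (PPath.single f) : DHom C _ _)))) =
      some (mk (PPath.single v))
    rw [flat_map p]
    exact congrArg some (mk_comp h)
  obj_tensor := fun _ _ => rfl
  obj_unit := rfl
  map_tensor := fun f g => (mk_comp (interchange₁ f g)).symm
  map_braid := fun A B => rfl

theorem ccTrace_DD {A B U : C.Obj} (f : C.Hom (C.tObj A U) (C.tObj B U)) :
    (DD C).ccTrace (mk (PPath.single f)) =
      some (mk (.cons (castHom (C.tObj_unit_right A) rfl (C.tHom (C.pid A) (C.eta U)))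
        (.cons (C.tHom (C.pid A) (C.braid (C.dual U) U))
          (.cons (castHom (C.tObj_assoc A U (C.dual U)) (C.tObj_assoc B U (C.dual U))
              (C.tHom f (C.pid (C.dual U))))
            (PPath.single (castHom rfl (C.tObj_unit_right B)
              (C.tHom (C.pid B) (C.eps U)))))))) := by
  show some (flat (.cons (castHom (Hom := DHom C) (C.tObj_unit_right A) rfl
      (tHomD (mk (.nil A)) (mk (PPath.single (C.eta U)))))
    (.cons (tHomD (mk (.nil A)) (mk (PPath.single (C.braid (C.dual U) U))))
      (.cons (castHom (Hom := DHom C) (C.tObj_assoc A U (C.dual U))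
          (C.tObj_assoc B U (C.dual U))
          (tHomD (mk (PPath.single f)) (mk (.nil (C.dual U)))))
        (PPath.single (castHom (Hom := DHom C) rfl (C.tObj_unit_right B)
          (tHomD (mk (.nil B)) (mk (PPath.single (C.eps U)))))))))) = _
  rw [tHomD_nil_single, tHomD_nil_single, tHomD_single_nil, tHomD_nil_single,
    mk_cast_single, mk_cast_single, mk_cast_single]
  rfl

end CCP


/-- Every compact closed paracategory admits a faithful strict symmetric monoidal
functor of paracategories into a compact closed total category, which preserves and
reflects the trace: `Tr^U(f)` is defined and equals `g` iff the canonical trace of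
`F f` in `D` equals `F g`. -/
theorem compactClosedPara_embeds (C : CompactClosedPara.{u, v}) :
    ∃ (D : CompactClosedPara.{u, max u v})
      (F : SSMFunctor C.toSSMParacategory D.toSSMParacategory),
      D.toParacategory.total ∧ F.Faithful ∧
      ∀ {A B U : C.Obj} (f : C.Hom (C.tObj A U) (C.tObj B U)) (g : C.Hom A B),
        C.ccTrace f = some g ↔
          D.ccTrace (castHom (F.obj_tensor A U) (F.obj_tensor B U) (F.map f)) =
            some (F.map g) := by
  refine ⟨CCP.DD C, CCP.FF C, fun A B p => rfl, ?_, ?_⟩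
  · intro A B f g h
    have h2 := CCP.comp_eq_of_mk_eq h
    rw [C.comp_single, C.comp_single] at h2
    exact Option.some.inj h2
  · intro A B U f g
    have key := CCP.ccTrace_DD (C := C) f
    constructor
    · intro h
      show (CCP.DD C).ccTrace (CCP.mk (PPath.single f)) = some (CCP.mk (PPath.single g))
      rw [key]
      exact congrArg some (CCP.mk_comp h)
    · intro h
      have h' : some (CCP.mk (.cons (castHom (C.tObj_unit_right A) rfl
          (C.tHom (C.pid A) (C.eta U)))
        (.cons (C.tHom (C.pid A) (C.braid (C.dual U) U))
          (.cons (castHom (C.tObj_assoc A U (C.dual U)) (C.tObj_assoc B U (C.dual U))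
              (C.tHom f (C.pid (C.dual U))))
            (PPath.single (castHom rfl (C.tObj_unit_right B)
              (C.tHom (C.pid B) (C.eps U)))))))) = some (CCP.mk (PPath.single g)) :=
        key.symm.trans h
      have h2 := CCP.comp_eq_of_mk_eq (Option.some.inj h')
      rw [C.comp_single] at h2
      exact h2
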